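/- Let d ≥ 1, let ε₀ ∈ (0, min(1/10, 2^{−d})], and define f̄ : ℝ^d → ℝ by f̄(x) = (Γ(3 + d/2)/(2π^{d/2}))·(1 − ‖x‖²)² for ‖x‖ < 1 and f̄(x) = 0 otherwise. Then for every x ∈ ℝ^d with ‖x‖ < 1 and every r ∈ (0, ε₀], ∫_{B_r(x)} f̄(u) du ≥ ε₀ · a_d · r^d · f̄(x). -/

import Mathlib

open MeasureTheory

noncomputable section

/-- The density `f̄(x) = (Γ(3 + d/2)/(2π^{d/2}))(1 - ‖x‖²)² 𝟙_{‖x‖ < 1}`. -/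
noncomputable def fbar (d : ℕ) (x : EuclideanSpace ℝ (Fin d)) : ℝ :=
  if ‖x‖ < 1 then
    Real.Gamma (3 + (d : ℝ) / 2) / (2 * Real.pi ^ ((d : ℝ) / 2)) * (1 - ‖x‖ ^ 2) ^ 2
  else 0

lemma Cpos (d : ℕ) : 0 < Real.Gamma (3 + (d : ℝ) / 2) / (2 * Real.pi ^ ((d : ℝ) / 2)) := by
  apply div_pos (Real.Gamma_pos_of_pos (by positivity))
  positivity

lemma fbar_nonneg (d : ℕ) (x : EuclideanSpace ℝ (Fin d)) : 0 ≤ fbar d x := by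
  unfold fbar
  split
  · exact mul_nonneg (Cpos d).le (by positivity)
  · exact le_refl 0

lemma fbar_meas (d : ℕ) : Measurable (fbar d) := by
  unfold fbar
  apply Measurable.ite
  · exact measurableSet_lt (by fun_prop) measurable_const
  · fun_prop
  · fun_prop

lemma fbar_le (d : ℕ) (x : EuclideanSpace ℝ (Fin d)) :
    fbar d x ≤ Real.Gamma (3 + (d : ℝ) / 2) / (2 * Real.pi ^ ((d : ℝ) / 2)) := by
  unfold fbar
  split_ifs with h
  · have h0 : 0 ≤ ‖x‖ := norm_nonneg x
    have h1 : (1 - ‖x‖^2)^2 ≤ 1 := by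
      nlinarith [mul_nonneg (sq_nonneg ‖x‖) (sub_nonneg.2 (by nlinarith : ‖x‖^2 ≤ 1)),
        sq_nonneg ‖x‖]
    calc Real.Gamma (3 + (d : ℝ) / 2) / (2 * Real.pi ^ ((d : ℝ) / 2)) * (1 - ‖x‖ ^ 2) ^ 2
        ≤ Real.Gamma (3 + (d : ℝ) / 2) / (2 * Real.pi ^ ((d : ℝ) / 2)) * 1 :=
          mul_le_mul_of_nonneg_left h1 (Cpos d).le
      _ = _ := mul_one _
  · exact (Cpos d).le

lemma fbar_eq (d : ℕ) (x : EuclideanSpace ℝ (Fin d)) (h : ‖x‖ < 1) :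
    fbar d x = Real.Gamma (3 + (d : ℝ) / 2) / (2 * Real.pi ^ ((d : ℝ) / 2)) * (1 - ‖x‖ ^ 2) ^ 2 :=
  if_pos h

lemma fbar_int (d : ℕ) (s : Set (EuclideanSpace ℝ (Fin d))) (hs : volume s ≠ ⊤) :
    IntegrableOn (fbar d) s := by
  apply Measure.integrableOn_of_bounded hs (fbar_meas d).aestronglyMeasurable
    (M := Real.Gamma (3 + (d : ℝ) / 2) / (2 * Real.pi ^ ((d : ℝ) / 2)))
  filter_upwards with a
  rw [Real.norm_eq_abs, abs_of_nonneg (fbar_nonneg d a)]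
  exact fbar_le d a

lemma sqrtpi_pow (d : ℕ) : Real.sqrt Real.pi ^ d = Real.pi ^ ((d : ℝ) / 2) := by
  rw [Real.sqrt_eq_rpow, ← Real.rpow_natCast (Real.pi ^ ((1:ℝ)/2)) d,
    ← Real.rpow_mul Real.pi_pos.le]
  ring_nf

set_option maxHeartbeats 2000000 in
theorem stmt13 (d : ℕ) (hd : 1 ≤ d) (ε₀ : ℝ)
    (hε₀ : 0 < ε₀) (hε₀' : ε₀ ≤ min (1/10 : ℝ) ((2 : ℝ) ^ (-(d : ℝ))))
    (x : EuclideanSpace ℝ (Fin d)) (hx : ‖x‖ < 1) (r : ℝ) (hr : 0 < r) (hr' : r ≤ ε₀) :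
    ε₀ * (Real.pi ^ ((d : ℝ) / 2) / Real.Gamma ((d : ℝ) / 2 + 1)) * r ^ d * fbar d x
      ≤ ∫ u in Metric.ball x r, fbar d u := by
  haveI : Nonempty (Fin d) := Fin.pos_iff_nonempty.mp hd
  set C := Real.Gamma (3 + (d : ℝ) / 2) / (2 * Real.pi ^ ((d : ℝ) / 2)) with hCdef
  set A := Real.pi ^ ((d : ℝ) / 2) / Real.Gamma ((d : ℝ) / 2 + 1) with hAdef
  have hApos : 0 < A := by
    apply div_pos (by positivity) (Real.Gamma_pos_of_pos (by positivity))
  have hε10 : ε₀ ≤ 1/10 := le_trans hε₀' (min_le_left _ _)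
  have hε2d : ε₀ ≤ ((2:ℝ) ^ d)⁻¹ := by
    have := le_trans hε₀' (min_le_right _ _)
    rwa [Real.rpow_neg (by norm_num), Real.rpow_natCast] at this
  have hr10 : r ≤ 1/10 := le_trans hr' hε10
  -- volume computation for any ball
  have hvol : ∀ (c : EuclideanSpace ℝ (Fin d)) (ρ : ℝ), 0 ≤ ρ →
      (volume (Metric.ball c ρ)).toReal = ρ ^ d * A := by
    intro c ρ hρ
    rw [EuclideanSpace.volume_ball, ENNReal.toReal_mul, ENNReal.toReal_pow,
      ENNReal.toReal_ofReal hρ, ENNReal.toReal_ofReal (by positivity)]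
    rw [Fintype.card_fin, hAdef, sqrtpi_pow]
  -- generic inner-ball lower bound
  have key : ∀ (c : EuclideanSpace ℝ (Fin d)) (ρ : ℝ), 0 ≤ ρ →
      Metric.ball c ρ ⊆ Metric.ball x r → ∀ m : ℝ,
      (∀ u ∈ Metric.ball c ρ, m ≤ fbar d u) →
      ε₀ * A * r ^ d * fbar d x ≤ m * (ρ ^ d * A) →
      ε₀ * A * r ^ d * fbar d x ≤ ∫ u in Metric.ball x r, fbar d u := by
    intro c ρ hρ hsub m hm hfin
    have hint : IntegrableOn (fbar d) (Metric.ball x r) :=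
      fbar_int d _ (measure_ball_lt_top).ne
    calc ε₀ * A * r ^ d * fbar d x ≤ m * (ρ ^ d * A) := hfin
      _ = m * (volume (Metric.ball c ρ)).toReal := by rw [hvol c ρ hρ]
      _ ≤ ∫ u in Metric.ball c ρ, fbar d u :=
          setIntegral_ge_of_const_le_real measurableSet_ball measure_ball_lt_top.ne hm
            (hint.mono_set hsub)
      _ ≤ ∫ u in Metric.ball x r, fbar d u := by
          apply setIntegral_mono_set hint
          · filter_upwards with a using fbar_nonneg d a
          · exact HasSubset.Subset.eventuallyLE hsub
  rcases le_or_gt (r/2) ‖x‖ with hcase | hcase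
  · -- case A : ‖x‖ ≥ r/2
    have hx0 : 0 < ‖x‖ := lt_of_lt_of_le (by positivity) hcase
    set c : EuclideanSpace ℝ (Fin d) := (1 - r / (2 * ‖x‖)) • x with hcdef
    have ht1 : r / (2 * ‖x‖) ≤ 1 := by
      rw [div_le_one (by positivity)]; linarith
    have htx : (1 - r / (2 * ‖x‖)) * ‖x‖ = ‖x‖ - r/2 := by
      field_simp
    have hnc : ‖c‖ = ‖x‖ - r/2 := by
      rw [hcdef, norm_smul, Real.norm_eq_abs, abs_of_nonneg (by linarith), htx]
    have hcx : ‖c - x‖ = r/2 := by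
      have h5 : c - x = (-(r / (2 * ‖x‖))) • x := by rw [hcdef]; module
      rw [h5, norm_smul, Real.norm_eq_abs, abs_neg, abs_of_nonneg (by positivity)]
      field_simp
    refine key c (r/2) (by positivity) ?_ (fbar d x) ?_ ?_
    · intro u hu
      rw [Metric.mem_ball, dist_eq_norm] at hu
      rw [Metric.mem_ball, dist_eq_norm]
      have h3 : ‖u - x‖ ≤ ‖u - c‖ + ‖c - x‖ := norm_sub_le_norm_sub_add_norm_sub u c x
      rw [hcx] at h3
      linarith
    · intro u hu
      rw [Metric.mem_ball, dist_eq_norm] at hu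
      have hun : ‖u‖ < ‖x‖ := by
        have h4 := norm_sub_norm_le u c
        rw [hnc] at h4
        linarith
      have hu1 : ‖u‖ < 1 := hun.trans hx
      rw [fbar_eq d u hu1, fbar_eq d x hx]
      apply mul_le_mul_of_nonneg_left _ (Cpos d).le
      have hA1 : 0 ≤ 1 - ‖x‖ ^ 2 := by
        nlinarith [mul_nonneg (sub_nonneg.2 hx.le) (by positivity : (0:ℝ) ≤ 1 + ‖x‖)]
      have hA2 : 1 - ‖x‖ ^ 2 ≤ 1 - ‖u‖ ^ 2 := by
        nlinarith [mul_nonneg (sub_nonneg.2 hun.le) (by positivity : (0:ℝ) ≤ ‖x‖ + ‖u‖)]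
      exact pow_le_pow_left₀ hA1 hA2 2
    · -- numeric : ε₀ * A * r^d * fbar x ≤ fbar x * ((r/2)^d * A)
      have h1 : ε₀ * r ^ d ≤ (r/2) ^ d := by
        rw [div_pow, div_eq_mul_inv]
        calc ε₀ * r ^ d ≤ ((2:ℝ)^d)⁻¹ * r ^ d :=
              mul_le_mul_of_nonneg_right hε2d (by positivity)
          _ = r ^ d * ((2:ℝ)^d)⁻¹ := by ring
      calc ε₀ * A * r ^ d * fbar d x = (ε₀ * r ^ d) * (A * fbar d x) := by ring
        _ ≤ (r/2)^d * (A * fbar d x) :=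
            mul_le_mul_of_nonneg_right h1 (mul_nonneg hApos.le (fbar_nonneg d x))
        _ = fbar d x * ((r/2) ^ d * A) := by ring
  · -- case B : ‖x‖ < r/2
    set s : ℝ := ‖x‖ with hsdef
    have hs0 : 0 ≤ s := norm_nonneg x
    set lam : ℝ := r - s with hlamdef
    have hlam : r/2 < lam := by rw [hlamdef]; linarith
    have hlam0 : 0 < lam := by linarith
    have hlamr : lam ≤ r := by rw [hlamdef]; linarith
    have hlam1 : lam ≤ 1/10 := hlamr.trans hr10
    have hlamsq : lam * lam ≤ 1/100 := by nlinarith [hlam0.le, hlam1]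
    have hfx : fbar d x = C * (1 - s^2)^2 := by
      rw [fbar_eq d x hx, ← hsdef, hCdef]
    clear_value s lam
    refine key 0 lam hlam0.le ?_ (C * (1 - lam^2)^2) ?_ ?_
    · intro u hu
      rw [Metric.mem_ball, dist_eq_norm] at hu ⊢
      rw [sub_zero] at hu
      calc ‖u - x‖ ≤ ‖u‖ + ‖x‖ := norm_sub_le u x
        _ < lam + s := by linarith
        _ = r := by rw [hlamdef]; ring
    · intro u hu
      rw [Metric.mem_ball, dist_eq_norm, sub_zero] at hu
      have hu1 : ‖u‖ < 1 := by linarith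
      show C * (1 - lam^2)^2 ≤ fbar d u
      rw [fbar_eq d u hu1, hCdef]
      apply mul_le_mul_of_nonneg_left _ (Cpos d).le
      have hB1 : 0 ≤ 1 - lam ^ 2 := by nlinarith [hlamsq]
      have hB2 : 1 - lam ^ 2 ≤ 1 - ‖u‖ ^ 2 := by
        nlinarith [mul_nonneg (sub_nonneg.2 hu.le) (by linarith [norm_nonneg u] : (0:ℝ) ≤ lam + ‖u‖)]
      exact pow_le_pow_left₀ hB1 hB2 2
    · -- numeric case B
      rw [hfx]
      -- reduce to (1-s²)² * r^d ≤ (1-lam²)² * (2 lam)^d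
      have hpoly : (1 - s^2)^2 * r ≤ (1 - lam^2)^2 * (2*lam) := by
        have e1 : (1 - lam^2)^2 * (2*lam) - (1 - s^2)^2 * r
            = (r - 2*s) * ((1 - lam^2)^2 - r^2 * (2 - lam^2 - s^2)) := by
          rw [hlamdef]; ring
        have hq1 : (9/10 : ℝ) ≤ (1 - lam^2)^2 := by
          nlinarith [hlamsq, sq_nonneg (lam*lam)]
        have hq2 : r^2 * (2 - lam^2 - s^2) ≤ 1/50 := by
          have hr2 : r^2 ≤ 1/100 := by nlinarith [hr.le, hr10]
          nlinarith [mul_nonneg (sq_nonneg r) (sq_nonneg lam),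
            mul_nonneg (sq_nonneg r) (sq_nonneg s), sq_nonneg r]
        have e2 : 0 ≤ (r - 2*s) * ((1 - lam^2)^2 - r^2 * (2 - lam^2 - s^2)) :=
          mul_nonneg (by linarith) (by linarith)
        linarith
      have hpow : r ^ (d-1) ≤ (2*lam) ^ (d-1) :=
        pow_le_pow_left₀ hr.le (by linarith) _
      have hkey : (1 - s^2)^2 * r^d ≤ (1 - lam^2)^2 * (2*lam)^d := by
        have hd1 : d = 1 + (d - 1) := by omega
        rw [hd1, pow_add, pow_add, pow_one, pow_one]
        calc (1-s^2)^2 * (r * r^(d-1)) = ((1-s^2)^2 * r) * r^(d-1) := by ring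
          _ ≤ ((1 - lam^2)^2 * (2*lam)) * (2*lam)^(d-1) :=
              mul_le_mul hpoly hpow (by positivity)
                (mul_nonneg (sq_nonneg _) (by linarith))
          _ = (1 - lam^2)^2 * (2*lam * (2*lam)^(d-1)) := by ring
      have h2d : ε₀ * (2:ℝ)^d ≤ 1 := by
        rw [← le_div_iff₀ (by positivity), div_eq_mul_inv, one_mul]; exact hε2d
      have hC0 : 0 < C := Cpos d
      calc ε₀ * A * r ^ d * (C * (1 - s^2)^2)
          = (ε₀ * (2:ℝ)^d) * ((1-s^2)^2 * r^d) * (C * A * ((2:ℝ)^d)⁻¹) := by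
            field_simp
        _ ≤ (1 * ((1 - lam^2)^2 * (2*lam)^d)) * (C * A * ((2:ℝ)^d)⁻¹) := by
            apply mul_le_mul_of_nonneg_right _ (by positivity)
            exact mul_le_mul h2d hkey (by positivity) (by norm_num)
        _ = C * (1 - lam^2)^2 * (lam^d * A) := by
            rw [mul_pow]
            field_simp
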